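/- arXiv:1603.04796 — 4 statements merged into one kernel-verified Lean document; each statement's English description precedes it below -/
import Mathlib

section
/- Fix M, N ∈ ℕ. For a tempered distribution ψ on ℝ^d set ‖ψ‖_{M,N} := sup{ ‖ψ∗f‖_∞ / ‖f‖_{M,N} : f ∈ 𝓢(ℝ^d), f ≠ 0 }, and let 𝓢'_{M,N} := { ψ : ‖ψ‖_{M,N} < ∞ }. If (ψ_n) is a sequence in 𝓢'_{M,N} that is Cauchy with respect to ‖·‖_{M,N}, then there exists a tempered distribution ψ ∈ 𝓢'_{M,N} such that for every f ∈ 𝓢(ℝ^d), the functions ψ_n∗f converge uniformly on ℝ^d to ψ∗f. -/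
/- Common setting: tempered distributions on ℝ^d, translation boundedness, convolution with
Schwartz functions, smooth approximate van Hove families, autocorrelation, and almost
periodicity, following "Diffraction theory and almost periodic distributions"
(Strungaru–Terauds). -/

open MeasureTheory SchwartzMap Filter Topology Metric Complex
open scoped ComplexConjugate ENNReal Real RealInnerProductSpace ContDiff

noncomputable section

/-- Euclidean space `ℝ^d`. -/
abbrev Ed (d : ℕ) := EuclideanSpace ℝ (Fin d)

/-- Tempered distributions on `ℝ^d`: continuous linear functionals on the Schwartz space of
complex-valued Schwartz functions. -/
abbrev TD (d : ℕ) := 𝓢(Ed d, ℂ) →L[ℂ] ℂ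

theorem hasTemperateGrowth_const_sub {E : Type*} [NormedAddCommGroup E] [NormedSpace ℝ E]
    (t : E) : Function.HasTemperateGrowth (fun s : E => t - s) := by
  refine Function.HasTemperateGrowth.of_fderiv (k := 1) (C := ‖t‖ + 1) ?_ ?_ ?_
  · have h : (fderiv ℝ (fun s : E => t - s)) = fun _ : E => -(ContinuousLinearMap.id ℝ E) := by
      funext x
      rw [show (fun s : E => t - s) = (fun s : E => t - id s) from rfl]
      rw [fderiv_const_sub, fderiv_id]
    rw [h]
    exact Function.HasTemperateGrowth.const _
  · exact (differentiable_const t).sub differentiable_id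
  · intro x
    calc ‖t - x‖ ≤ ‖t‖ + ‖x‖ := norm_sub_le _ _
    _ ≤ (‖t‖ + 1) * (1 + ‖x‖) ^ 1 := by nlinarith [norm_nonneg x, norm_nonneg (t : E)]

theorem isometry_const_sub {E : Type*} [NormedAddCommGroup E] [NormedSpace ℝ E] (t : E) :
    Isometry (fun s : E => t - s) :=
  Isometry.of_dist_eq fun a b => by
    simp only [dist_eq_norm, sub_sub_sub_cancel_left, norm_sub_rev]

/-- For `t ∈ ℝ^d`, the map `f ↦ T_t f⁻ = (s ↦ f (t - s))` on Schwartz space, where `f⁻` is the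
reflection `f⁻(s) = f (-s)` and `T_t` is translation by `t`. -/
def reflTranslate {d : ℕ} (t : Ed d) : 𝓢(Ed d, ℂ) →L[ℂ] 𝓢(Ed d, ℂ) :=
  SchwartzMap.compCLMOfAntilipschitz ℂ (hasTemperateGrowth_const_sub t)
    (isometry_const_sub t).antilipschitz

/-- The convolution `ψ∗f` of a tempered distribution `ψ` with a Schwartz function `f`:
`(ψ∗f)(t) = ψ(T_t f⁻)`. -/
def convD {d : ℕ} (ψ : TD d) (f : 𝓢(Ed d, ℂ)) : Ed d → ℂ := fun t => ψ (reflTranslate t f)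

/-- A tempered distribution `ψ` is translation bounded on `𝓢` if `ψ∗f` is a bounded function
for every Schwartz function `f`. -/
def IsTranslationBoundedTD {d : ℕ} (ψ : TD d) : Prop :=
  ∀ f : 𝓢(Ed d, ℂ), ∃ C : ℝ, ∀ t : Ed d, ‖convD ψ f t‖ ≤ C

/-- The coordinate directions, with multiplicities, of a multi-index `β`. -/
def dirs {d : ℕ} (β : Fin d → ℕ) : List (Fin d) :=
  (List.finRange d).flatMap fun i => List.replicate (β i) i

/-- The multi-index partial derivative `D^β` on Schwartz space, as the composition of the
directional derivative operators along the coordinate directions of `β`. -/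
def mpderivOp {d : ℕ} (β : Fin d → ℕ) : 𝓢(Ed d, ℂ) →L[ℂ] 𝓢(Ed d, ℂ) :=
  (dirs β).foldr
    (fun i T => (LineDeriv.lineDerivOpCLM ℂ 𝓢(Ed d, ℂ) (EuclideanSpace.single i (1 : ℝ))).comp T)
    (ContinuousLinearMap.id ℂ _)

/-- The norm `‖f‖_{M,N} := sup_{|α| ≤ M, |β| ≤ N} sup_x |x^α (D^β f)(x)|` on Schwartz space. -/
def normMN (d M N : ℕ) (f : 𝓢(Ed d, ℂ)) : ℝ :=
  ⨆ p : {p : (Fin d → ℕ) × (Fin d → ℕ) // (∑ i, p.1 i) ≤ M ∧ (∑ i, p.2 i) ≤ N},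
    ⨆ x : Ed d, ‖(∏ i, x i ^ p.1.1 i) • mpderivOp p.1.2 f x‖

/-- The distributional derivative `D^α ψ`, given by `(D^α ψ)(f) = (−1)^{|α|} ψ(D^α f)`. -/
def mderivTD {d : ℕ} (α : Fin d → ℕ) (ψ : TD d) : TD d :=
  ((-1 : ℂ) ^ (∑ i, α i)) • (ψ.comp (mpderivOp α))

open Classical in
/-- The Schwartz representative of a function `F : ℝ^d → ℂ`, when one exists (and `0`
otherwise); representatives are unique since the coercion `𝓢(ℝ^d, ℂ) → (ℝ^d → ℂ)` is
injective. -/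
def toS (d : ℕ) (F : Ed d → ℂ) : 𝓢(Ed d, ℂ) :=
  if h : ∃ G : 𝓢(Ed d, ℂ), ⇑G = F then h.choose else 0

/-- A tempered distribution `φ` has compact support if there is a compact set `K` such that
`φ(f) = 0` for every Schwartz function `f` vanishing on a neighbourhood of `K`. -/
def HasCompactSupportTD {d : ℕ} (φ : TD d) : Prop :=
  ∃ K : Set (Ed d), IsCompact K ∧ ∀ f : 𝓢(Ed d, ℂ),
    (∃ U : Set (Ed d), IsOpen U ∧ K ⊆ U ∧ ∀ x ∈ U, f x = 0) → φ f = 0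

/-- A positive measure `ρ` on `ℝ^d` is translation bounded if
`sup_x ρ(x + K) < ∞` for every compact `K`. -/
def IsTranslationBoundedMeasure {d : ℕ} (ρ : Measure (Ed d)) : Prop :=
  ∀ K : Set (Ed d), IsCompact K →
    ∃ C : ℝ≥0∞, C ≠ ⊤ ∧ ∀ x : Ed d, ρ ((fun y => x + y) '' K) ≤ C

/-- A smooth approximate van Hove family: for each `R ≥ 1`, `h_R` is smooth and compactly
supported, with `1_{B_R} ≤ h_R ≤ 1` and `h_R = 0` outside the closed ball of radius `R + 1`. -/
def IsSmoothVanHove (d : ℕ) (h : ℝ → Ed d → ℝ) : Prop :=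
  ∀ R : ℝ, 1 ≤ R →
    ContDiff ℝ ∞ (h R) ∧ HasCompactSupport (h R) ∧
    (∀ x, 0 ≤ h R x ∧ h R x ≤ 1) ∧
    (∀ x ∈ ball (0 : Ed d) R, h R x = 1) ∧
    (∀ x ∉ closedBall (0 : Ed d) (R + 1), h R x = 0)

/-- The cutoff distribution `hψ : f ↦ ψ(h·f)` for a multiplier `h`. -/
def cutoffFn {d : ℕ} (h : Ed d → ℝ) (ψ : TD d) : 𝓢(Ed d, ℂ) → ℂ :=
  fun f => ψ (toS d fun x => (h x : ℂ) * f x)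

/-- For a distribution `θ`, the distribution `θ̃` defined by `θ̃(f) = conj (θ(f̃))`, where
`f̃(x) = conj (f (-x))`. -/
def tildeFn {d : ℕ} (θ : 𝓢(Ed d, ℂ) → ℂ) : 𝓢(Ed d, ℂ) → ℂ :=
  fun f => conj (θ (toS d fun x => conj (f (-x))))

/-- For a distribution `η`, the distribution `η⁻` defined by `η⁻(g) = η(g⁻)`, where
`g⁻(x) = g (-x)`. -/
def reflFn {d : ℕ} (η : 𝓢(Ed d, ℂ) → ℂ) : 𝓢(Ed d, ℂ) → ℂ :=
  fun g => η (toS d fun x => g (-x))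

/-- The convolution `θ∗η` of a distribution `θ` with a (compactly supported) distribution `η`,
applied to a test function `f`: `(θ∗η)(f) = θ(η⁻∗f)`, where `η⁻∗f` is the Schwartz function
`t ↦ η⁻(T_t f⁻)`. -/
def convDistApp {d : ℕ} (θ η : 𝓢(Ed d, ℂ) → ℂ) (f : 𝓢(Ed d, ℂ)) : ℂ :=
  θ (toS d fun t => reflFn η (reflTranslate t f))

/-- The autocorrelation approximant `(1/vol(B_R)) · (h_Rψ)∗(h_Rψ)~` applied to a test
function `f`. -/
def acApprox {d : ℕ} (h : ℝ → Ed d → ℝ) (ψ : TD d) (R : ℝ) (f : 𝓢(Ed d, ℂ)) : ℂ :=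
  ((volume (ball (0 : Ed d) R)).toReal)⁻¹ •
    convDistApp (cutoffFn (h R) ψ) (tildeFn (cutoffFn (h R) ψ)) f

/-- `φ` is an autocorrelation of `ψ`: for some smooth approximate van Hove family `(h_R)` and
some sequence of radii `R_n → ∞`,
`(1/vol(B_{R_n})) (h_{R_n}ψ)∗(h_{R_n}ψ)~ → φ` in the weak-∗ topology (pointwise on `𝓢`). -/
def IsAutocorrelationOf {d : ℕ} (φ ψ : TD d) : Prop :=
  ∃ h : ℝ → Ed d → ℝ, IsSmoothVanHove d h ∧
    ∃ R : ℕ → ℝ, (∀ n, 1 ≤ R n) ∧ Tendsto R atTop atTop ∧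
      ∀ f : 𝓢(Ed d, ℂ), Tendsto (fun n => acApprox h ψ (R n) f) atTop (𝓝 (φ f))

/-- A function `g : ℝ^d → ℂ` is weakly almost periodic: `g` is bounded continuous and
uniformly continuous, and its set of translates is relatively compact in the weak topology of
the Banach space `C_b(ℝ^d)`. -/
def IsWAPFun (d : ℕ) (g : Ed d → ℂ) : Prop :=
  UniformContinuous g ∧
  ∃ G : BoundedContinuousFunction (Ed d) ℂ, ⇑G = g ∧
    ∃ Y : Set (WeakSpace ℂ (BoundedContinuousFunction (Ed d) ℂ)), IsCompact Y ∧
      ∀ t : Ed d,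
        toWeakSpace ℂ _ (G.compContinuous ⟨fun s => s - t, by continuity⟩) ∈ Y

/-- A function `g : ℝ^d → ℂ` in `C_b` is strongly almost periodic: its set of translates is
relatively compact in the norm topology of `C_b(ℝ^d)`. -/
def IsSAPFun (d : ℕ) (g : Ed d → ℂ) : Prop :=
  ∃ G : BoundedContinuousFunction (Ed d) ℂ, ⇑G = g ∧
    ∃ Y : Set (BoundedContinuousFunction (Ed d) ℂ), IsCompact Y ∧
      ∀ t : Ed d, G.compContinuous ⟨fun s => s - t, by continuity⟩ ∈ Y

/-- A function `g : ℝ^d → ℂ` is null weakly almost periodic: it is weakly almost periodic and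
`(1/vol(B_R)) ∫_{B_R} |g| → 0` as `R → ∞`. -/
def IsWAP0Fun (d : ℕ) (g : Ed d → ℂ) : Prop :=
  IsWAPFun d g ∧
    Tendsto (fun R : ℝ => ((volume (ball (0 : Ed d) R)).toReal)⁻¹ *
      ∫ t in ball (0 : Ed d) R, ‖g t‖) atTop (𝓝 0)

/-- A tempered distribution `ψ` is positive definite if `ψ(f∗f̃)` is real and nonnegative for
every Schwartz function `f`, where `(f∗f̃)(x) = ∫ f(x-y) conj (f(-y)) dy`. -/
def IsPositiveDefiniteTD {d : ℕ} (ψ : TD d) : Prop :=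
  ∀ f : 𝓢(Ed d, ℂ),
    0 ≤ (ψ (toS d fun x => ∫ y, f (x - y) * conj (f (-y)))).re ∧
    (ψ (toS d fun x => ∫ y, f (x - y) * conj (f (-y)))).im = 0

/-- The distribution `χ̄_xψ : g ↦ ψ(χ̄_x·g)`, where `χ_x(y) = e^{2πi x·y}`. -/
def charMulFn {d : ℕ} (x : Ed d) (ψ : TD d) : 𝓢(Ed d, ℂ) → ℂ :=
  fun g => ψ (toS d fun y => Complex.exp (-(2 * (π : ℝ) * Complex.I * (⟪x, y⟫ : ℝ))) * g y)


lemma normMN_nonneg (d M N : ℕ) (f : 𝓢(Ed d, ℂ)) : 0 ≤ normMN d M N f :=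
  Real.iSup_nonneg fun _ => Real.iSup_nonneg fun _ => norm_nonneg _

lemma reflTranslate_zero_zero {d : ℕ} (g : 𝓢(Ed d, ℂ)) :
    reflTranslate (0 : Ed d) (reflTranslate (0 : Ed d) g) = g := by
  ext x
  simp [reflTranslate, Function.comp]

lemma convD_reflTranslate_zero {d : ℕ} (θ : TD d) (g : 𝓢(Ed d, ℂ)) :
    convD θ (reflTranslate (0 : Ed d) g) 0 = θ g := by
  rw [convD, reflTranslate_zero_zero]

lemma coord_abs_le_norm {d : ℕ} (x : Ed d) (i : Fin d) : |x i| ≤ ‖x‖ := by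
  rw [EuclideanSpace.norm_eq]
  have h1 : |x i| = Real.sqrt (‖x i‖ ^ 2) := by
    rw [Real.norm_eq_abs, Real.sqrt_sq_eq_abs, _root_.abs_abs]
  rw [h1]
  exact Real.sqrt_le_sqrt (Finset.single_le_sum (f := fun j => ‖x j‖ ^ 2)
    (fun j _ => sq_nonneg _) (Finset.mem_univ i))

/-- The continuous seminorm-like function dominating `normMN`. -/
def QMN (d M N : ℕ) (f : 𝓢(Ed d, ℂ)) : ℝ :=
  ∑ β ∈ Fintype.piFinset (fun _ : Fin d => Finset.range (N + 1)),
    2 ^ M * ∑ m ∈ Finset.Iic ((M, 0) : ℕ × ℕ),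
      SchwartzMap.seminorm ℝ m.1 m.2 (mpderivOp β f)

lemma QMN_nonneg (d M N : ℕ) (f : 𝓢(Ed d, ℂ)) : 0 ≤ QMN d M N f :=
  Finset.sum_nonneg fun _ _ => mul_nonneg (by positivity)
    (Finset.sum_nonneg fun _ _ => apply_nonneg _ _)

lemma QMN_continuous (d M N : ℕ) : Continuous (QMN d M N) := by
  refine continuous_finset_sum _ fun β _ => continuous_const.mul ?_
  refine continuous_finset_sum _ fun m _ => ?_
  exact ((schwartz_withSeminorms ℝ (Ed d) ℂ).continuous_seminorm m).comp
    (mpderivOp β).continuous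

set_option maxHeartbeats 1000000 in
lemma normMN_le_QMN (d M N : ℕ) (f : 𝓢(Ed d, ℂ)) : normMN d M N f ≤ QMN d M N f := by
  refine Real.iSup_le (fun p => ?_) (QMN_nonneg d M N f)
  obtain ⟨⟨α, β⟩, hα, hβ⟩ := p
  refine Real.iSup_le (fun x => ?_) (QMN_nonneg d M N f)
  set g := mpderivOp β f with hg
  have h2 : |∏ i, x i ^ α i| ≤ (1 + ‖x‖) ^ M := by
    calc |∏ i, x i ^ α i| = ∏ i, |x i| ^ α i := by
          rw [Finset.abs_prod]; exact Finset.prod_congr rfl fun i _ => abs_pow _ _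
      _ ≤ ∏ i, (1 + ‖x‖) ^ α i :=
          Finset.prod_le_prod (fun i _ => by positivity)
            (fun i _ => pow_le_pow_left₀ (abs_nonneg _)
              ((coord_abs_le_norm x i).trans (by linarith [norm_nonneg x])) _)
      _ = (1 + ‖x‖) ^ (∑ i, α i) := Finset.prod_pow_eq_pow_sum _ _ _
      _ ≤ (1 + ‖x‖) ^ M := pow_le_pow_right₀ (by linarith [norm_nonneg x]) hα
  calc ‖(∏ i, x i ^ α i) • g x‖ = |∏ i, x i ^ α i| * ‖g x‖ := by
        rw [norm_smul, Real.norm_eq_abs]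
    _ ≤ (1 + ‖x‖) ^ M * ‖g x‖ := mul_le_mul_of_nonneg_right h2 (norm_nonneg _)
    _ = (1 + ‖x‖) ^ M * ‖iteratedFDeriv ℝ 0 (⇑g) x‖ := by rw [norm_iteratedFDeriv_zero]
    _ ≤ 2 ^ M * (Finset.Iic ((M, 0) : ℕ × ℕ)).sup
          (fun m => SchwartzMap.seminorm ℝ m.1 m.2) g :=
        SchwartzMap.one_add_le_sup_seminorm_apply (m := ((M, 0) : ℕ × ℕ)) le_rfl le_rfl g x
    _ ≤ 2 ^ M * ∑ m ∈ Finset.Iic ((M, 0) : ℕ × ℕ),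
          SchwartzMap.seminorm ℝ m.1 m.2 g := by
        refine mul_le_mul_of_nonneg_left ?_ (by positivity)
        refine Seminorm.finset_sup_apply_le
          (Finset.sum_nonneg fun _ _ => apply_nonneg _ _) (fun m hm => ?_)
        exact Finset.single_le_sum (f := fun m => SchwartzMap.seminorm ℝ
          (E := Ed d) (F := ℂ) m.1 m.2 g) (fun _ _ => apply_nonneg _ _) hm
    _ ≤ QMN d M N f := by
        refine Finset.single_le_sum
          (f := fun β' => 2 ^ M * ∑ m ∈ Finset.Iic ((M, 0) : ℕ × ℕ),
            SchwartzMap.seminorm ℝ m.1 m.2 (mpderivOp β' f))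
          (fun _ _ => mul_nonneg (by positivity)
            (Finset.sum_nonneg fun _ _ => apply_nonneg _ _)) ?_
        rw [Fintype.mem_piFinset]
        intro i
        rw [Finset.mem_range, Nat.lt_succ_iff]
        exact le_trans (Finset.single_le_sum (f := fun j => β j)
          (fun _ _ => Nat.zero_le _) (Finset.mem_univ i)) hβ

/-- If `(ψ_n)` is a sequence in `𝓢'_{M,N}` that is Cauchy for the norm
`‖ψ‖_{M,N} = sup_{f ≠ 0} ‖ψ∗f‖_∞ / ‖f‖_{M,N}`, then there is `ψ ∈ 𝓢'_{M,N}` with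
`ψ_n∗f → ψ∗f` uniformly for every Schwartz `f`. -/
theorem statement1 (d M N : ℕ) (ψn : ℕ → TD d)
    (hmem : ∀ n : ℕ, ∃ C : ℝ, ∀ (f : 𝓢(Ed d, ℂ)) (t : Ed d),
      ‖convD (ψn n) f t‖ ≤ C * normMN d M N f)
    (hcauchy : ∀ ε : ℝ, 0 < ε → ∃ n₀ : ℕ, ∀ m, n₀ ≤ m → ∀ n, n₀ ≤ n →
      ∀ (f : 𝓢(Ed d, ℂ)) (t : Ed d),
        ‖convD (ψn m) f t - convD (ψn n) f t‖ ≤ ε * normMN d M N f) :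
    ∃ ψ : TD d,
      (∃ C : ℝ, ∀ (f : 𝓢(Ed d, ℂ)) (t : Ed d), ‖convD ψ f t‖ ≤ C * normMN d M N f) ∧
      ∀ f : 𝓢(Ed d, ℂ),
        TendstoUniformly (fun n t => convD (ψn n) f t) (convD ψ f) atTop := by
  classical
  set r : 𝓢(Ed d, ℂ) →L[ℂ] 𝓢(Ed d, ℂ) := reflTranslate (0 : Ed d) with hr
  -- each evaluation sequence is Cauchy
  have hcau : ∀ g : 𝓢(Ed d, ℂ), CauchySeq (fun n => ψn n g) := by
    intro g
    rw [Metric.cauchySeq_iff]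
    intro ε hε
    set c := normMN d M N (r g) with hc
    have hc0 : 0 ≤ c := normMN_nonneg d M N _
    obtain ⟨n₀, h₀⟩ := hcauchy (ε / (c + 1)) (by positivity)
    refine ⟨n₀, fun m hm n hn => ?_⟩
    have h := h₀ m hm n hn (r g) 0
    rw [convD_reflTranslate_zero, convD_reflTranslate_zero] at h
    rw [dist_eq_norm]
    calc ‖ψn m g - ψn n g‖ ≤ ε / (c + 1) * c := h
      _ < ε := by rw [div_mul_eq_mul_div, div_lt_iff₀ (by positivity)]; nlinarith
  have hex : ∀ g : 𝓢(Ed d, ℂ), ∃ a : ℂ, Tendsto (fun n => ψn n g) atTop (𝓝 a) :=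
    fun g => cauchySeq_tendsto_of_complete (hcau g)
  choose L hL using hex
  -- L is linear
  have hLadd : ∀ g g', L (g + g') = L g + L g' := fun g g' =>
    tendsto_nhds_unique (hL (g + g'))
      (by simpa using ((hL g).add (hL g')))
  have hLsmul : ∀ (a : ℂ) g, L (a • g) = a • L g := fun a g =>
    tendsto_nhds_unique (hL (a • g))
      (by simpa using ((hL g).const_smul a))
  set ψlin : 𝓢(Ed d, ℂ) →ₗ[ℂ] ℂ :=
    { toFun := L, map_add' := hLadd, map_smul' := hLsmul } with hψlin
  -- bound on the error term
  obtain ⟨n₀, h₀⟩ := hcauchy 1 one_pos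
  have herr : ∀ g : 𝓢(Ed d, ℂ), ‖L g - ψn n₀ g‖ ≤ normMN d M N (r g) := by
    intro g
    have htend : Tendsto (fun m => ‖ψn m g - ψn n₀ g‖) atTop (𝓝 ‖L g - ψn n₀ g‖) :=
      ((hL g).sub tendsto_const_nhds).norm
    refine le_of_tendsto htend (Filter.eventually_atTop.2 ⟨n₀, fun m hm => ?_⟩)
    have h := h₀ m hm n₀ le_rfl (r g) 0
    rw [convD_reflTranslate_zero, convD_reflTranslate_zero] at h
    simpa using h
  -- continuity
  set Elin : 𝓢(Ed d, ℂ) →ₗ[ℂ] ℂ := ψlin - (ψn n₀ : 𝓢(Ed d, ℂ) →ₗ[ℂ] ℂ) with hElin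
  have hEcont : Continuous Elin := by
    apply continuous_of_continuousAt_zero Elin
    have h0 : ContinuousAt (fun g => QMN d M N (r g)) 0 :=
      ((QMN_continuous d M N).comp r.continuous).continuousAt
    have hQ0 : QMN d M N (r (0 : 𝓢(Ed d, ℂ))) = 0 := by
      rw [map_zero]
      simp [QMN, map_zero]
    rw [ContinuousAt, map_zero]
    refine squeeze_zero_norm (fun g => ?_) (by rw [← hQ0]; exact h0)
    exact (herr g).trans (normMN_le_QMN d M N (r g))
  have hψcont : Continuous ψlin := by
    have : ⇑ψlin = fun g => Elin g + ψn n₀ g := by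
      funext g; simp [hElin]
    rw [this]
    exact hEcont.add (ψn n₀).continuous
  set ψ : TD d := { toLinearMap := ψlin, cont := hψcont } with hψ
  have hconv : ∀ (f : 𝓢(Ed d, ℂ)) (t : Ed d),
      Tendsto (fun n => convD (ψn n) f t) atTop (𝓝 (convD ψ f t)) := by
    intro f t
    exact hL (reflTranslate t f)
  refine ⟨ψ, ?_, ?_⟩
  · obtain ⟨C₀, hC₀⟩ := hmem n₀
    refine ⟨C₀ + 1, fun f t => ?_⟩
    have h1 : ‖convD ψ f t - convD (ψn n₀) f t‖ ≤ normMN d M N f := by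
      have htend : Tendsto (fun m => ‖convD (ψn m) f t - convD (ψn n₀) f t‖) atTop
          (𝓝 ‖convD ψ f t - convD (ψn n₀) f t‖) :=
        ((hconv f t).sub tendsto_const_nhds).norm
      refine le_of_tendsto htend (Filter.eventually_atTop.2 ⟨n₀, fun m hm => ?_⟩)
      simpa using h₀ m hm n₀ le_rfl f t
    calc ‖convD ψ f t‖ ≤ ‖convD ψ f t - convD (ψn n₀) f t‖ + ‖convD (ψn n₀) f t‖ := by
          simpa using norm_add_le (convD ψ f t - convD (ψn n₀) f t) (convD (ψn n₀) f t)
      _ ≤ normMN d M N f + C₀ * normMN d M N f := add_le_add h1 (hC₀ f t)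
      _ = (C₀ + 1) * normMN d M N f := by ring
  · intro f
    rw [← tendstoUniformlyOn_univ]
    refine UniformCauchySeqOn.tendstoUniformlyOn_of_tendsto ?_
      (fun t _ => hconv f t)
    rw [Metric.uniformCauchySeqOn_iff]
    intro ε hε
    set c := normMN d M N f with hc
    have hc0 : 0 ≤ c := normMN_nonneg d M N f
    obtain ⟨n₁, h₁⟩ := hcauchy (ε / (c + 1)) (by positivity)
    refine ⟨n₁, fun m hm n hn t _ => ?_⟩
    rw [dist_eq_norm]
    calc ‖convD (ψn m) f t - convD (ψn n) f t‖ ≤ ε / (c + 1) * c := h₁ m hm n hn f t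
      _ < ε := by rw [div_mul_eq_mul_div, div_lt_iff₀ (by positivity)]; nlinarith


end
end

section
/- Let μ be a positive regular Borel measure on ℝ^d that is finite on compact sets. Then the following are equivalent: (i) μ is translation bounded, i.e. sup_{x ∈ ℝ^d} μ(x + K) < ∞ for every compact K ⊆ ℝ^d; (ii) every Schwartz function is μ-integrable, the linear functional f ↦ ∫ f dμ defines a tempered distribution (it is continuous on 𝓢(ℝ^d)), and this tempered distribution is translation bounded on 𝓢, i.e. for every f ∈ 𝓢(ℝ^d) the function t ↦ ∫ f(t − s) dμ(s) is bounded on ℝ^d. -/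
/- Common setting: tempered distributions on ℝ^d, translation boundedness, convolution with
Schwartz functions, smooth approximate van Hove families, autocorrelation, and almost
periodicity, following "Diffraction theory and almost periodic distributions"
(Strungaru–Terauds). -/

open MeasureTheory SchwartzMap Filter Topology Metric Complex
open scoped ComplexConjugate ENNReal Real RealInnerProductSpace ContDiff

noncomputable section

section Statement5Aux

variable {d : ℕ}

lemma pt_ineq5 {n : ℝ} (hn : 0 ≤ n) (a u : Ed d) (hu : ‖u‖ ≤ 1) :
    (1 + ‖a‖) ^ (-n) ≤ 2 ^ n * (1 + ‖a - u‖) ^ (-n) := by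
  have hA : (0:ℝ) < 1 + ‖a‖ := by positivity
  have hB : (0:ℝ) < 1 + ‖a - u‖ := by positivity
  have h : 1 + ‖a - u‖ ≤ 2 * (1 + ‖a‖) := by
    have h1 : ‖a - u‖ ≤ ‖a‖ + ‖u‖ := norm_sub_le a u
    linarith [norm_nonneg a]
  have hpow : (1 + ‖a - u‖) ^ n ≤ 2 ^ n * (1 + ‖a‖) ^ n := by
    calc (1 + ‖a - u‖) ^ n ≤ (2 * (1 + ‖a‖)) ^ n := Real.rpow_le_rpow hB.le h hn
    _ = 2 ^ n * (1 + ‖a‖) ^ n := Real.mul_rpow (by norm_num) hA.le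
  have hAn : (0:ℝ) < (1 + ‖a‖) ^ n := Real.rpow_pos_of_pos hA n
  have hBn : (0:ℝ) < (1 + ‖a - u‖) ^ n := Real.rpow_pos_of_pos hB n
  rw [Real.rpow_neg hA.le, Real.rpow_neg hB.le, ← div_eq_mul_inv, le_div_iff₀ hBn]
  calc ((1 + ‖a‖) ^ n)⁻¹ * (1 + ‖a - u‖) ^ n
      ≤ ((1 + ‖a‖) ^ n)⁻¹ * (2 ^ n * (1 + ‖a‖) ^ n) := by
        exact mul_le_mul_of_nonneg_left hpow (by positivity)
    _ = 2 ^ n := by field_simp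

lemma g_cont5 : Continuous fun x : Ed d => (1 + ‖x‖) ^ (-(d+1:ℝ)) :=
  (continuous_const.add continuous_norm).rpow_const (fun x => Or.inl (show (0:ℝ) < 1 + ‖x‖ by positivity).ne')

lemma gE_meas5 : Measurable fun x : Ed d => ENNReal.ofReal ((1 + ‖x‖) ^ (-(d+1:ℝ))) :=
  (ENNReal.continuous_ofReal.comp g_cont5).measurable

lemma I_lt_top5 : ∫⁻ x : Ed d, ENNReal.ofReal ((1 + ‖x‖) ^ (-(d+1:ℝ))) < ⊤ := by
  have hint : Integrable (fun x : Ed d => (1 + ‖x‖) ^ (-(d+1:ℝ))) volume := by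
    apply integrable_one_add_norm
    rw [finrank_euclideanSpace_fin]
    exact lt_add_one _
  have h2 := (hasFiniteIntegral_iff_ofReal (Eventually.of_forall fun x =>
    Real.rpow_nonneg (by positivity) _)).mp hint.hasFiniteIntegral
  exact h2

lemma key_bound5 (ρ : Measure (Ed d)) [SFinite ρ] (C : ℝ≥0∞)
    (hball : ∀ w : Ed d, ρ (closedBall w 1) ≤ C) (t : Ed d) :
    ∫⁻ s, ENNReal.ofReal ((1 + ‖t - s‖) ^ (-(d+1:ℝ))) ∂ρ ≤
      (volume (ball (0:Ed d) 1))⁻¹ * (ENNReal.ofReal (2 ^ (d+1:ℝ)) *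
        (C * ∫⁻ x : Ed d, ENNReal.ofReal ((1 + ‖x‖) ^ (-(d+1:ℝ))))) := by
  set n : ℝ := (d+1:ℝ) with hn
  set g : Ed d → ℝ≥0∞ := fun x => ENNReal.ofReal ((1 + ‖x‖) ^ (-n)) with hg
  set v : ℝ≥0∞ := volume (ball (0:Ed d) 1) with hv
  have hv0 : v ≠ 0 := (measure_ball_pos volume 0 one_pos).ne'
  have hvt : v ≠ ⊤ := measure_ball_lt_top.ne
  set f : Ed d → Ed d → ℝ≥0∞ := fun s w => (ball s 1).indicator (fun w => g (t - w)) w with hf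
  have hgtm : Measurable fun w : Ed d => g (t - w) :=
    gE_meas5.comp (continuous_const.sub continuous_id).measurable
  have hFm : Measurable (Function.uncurry f) := by
    have : Function.uncurry f = fun p : Ed d × Ed d =>
        if dist p.2 p.1 < 1 then g (t - p.2) else 0 := by
      classical
      funext p
      rw [Function.uncurry]
      simp only [hf]
      by_cases hp : p.2 ∈ ball p.1 1
      · rw [Set.indicator_of_mem hp, if_pos (mem_ball.mp hp)]
      · rw [Set.indicator_of_notMem hp, if_neg (fun h => hp (mem_ball.mpr h))]
    rw [this]
    exact Measurable.ite (isOpen_lt (continuous_dist.comp (continuous_snd.prodMk continuous_fst))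
      continuous_const).measurableSet (hgtm.comp measurable_snd) measurable_const
  have hgm : Measurable fun s : Ed d => g (t - s) := hgtm
  have step1 : ∀ s : Ed d, v * g (t - s) ≤
      ENNReal.ofReal (2 ^ n) * ∫⁻ w, f s w ∂volume := by
    intro s
    have sub1 : ∫⁻ u in ball (0:Ed d) 1, g (t - s - u) ∂volume = ∫⁻ w, f s w ∂volume := by
      rw [hf]
      rw [lintegral_indicator measurableSet_ball]
      have hmp : MeasurePreserving (fun u : Ed d => s + u) volume volume :=
        measurePreserving_add_left volume s
      have hpre : (fun u : Ed d => s + u) ⁻¹' (ball s 1) = ball (0:Ed d) 1 := by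
        ext u
        simp [mem_ball, dist_eq_norm]
      rw [← hmp.setLIntegral_comp_preimage measurableSet_ball hgtm, hpre]
      congr 1
      funext u
      rw [sub_add_eq_sub_sub]
    calc v * g (t - s) = ∫⁻ _ in ball (0:Ed d) 1, g (t - s) ∂volume := by
          rw [setLIntegral_const, mul_comm]
      _ ≤ ∫⁻ u in ball (0:Ed d) 1, ENNReal.ofReal (2 ^ n) * g (t - s - u) ∂volume := by
          apply setLIntegral_mono (by fun_prop)
          intro u hu
          rw [hg]
          simp only
          rw [← ENNReal.ofReal_mul (by positivity)]
          exact ENNReal.ofReal_le_ofReal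
            (pt_ineq5 (by positivity) (t - s) u (mem_ball_zero_iff.mp hu).le)
      _ = ENNReal.ofReal (2 ^ n) * ∫⁻ u in ball (0:Ed d) 1, g (t - s - u) ∂volume := by
          rw [lintegral_const_mul _ (by fun_prop : Measurable fun u : Ed d => g (t - s - u))]
      _ = ENNReal.ofReal (2 ^ n) * ∫⁻ w, f s w ∂volume := by rw [sub1]
  have main : v * ∫⁻ s, g (t - s) ∂ρ ≤
      ENNReal.ofReal (2 ^ n) * (C * ∫⁻ x : Ed d, g x ∂volume) := by
    calc v * ∫⁻ s, g (t - s) ∂ρ = ∫⁻ s, v * g (t - s) ∂ρ := (lintegral_const_mul v hgm).symm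
      _ ≤ ∫⁻ s, ENNReal.ofReal (2 ^ n) * ∫⁻ w, f s w ∂volume ∂ρ := lintegral_mono step1
      _ = ENNReal.ofReal (2 ^ n) * ∫⁻ s, ∫⁻ w, f s w ∂volume ∂ρ :=
          lintegral_const_mul _ hFm.lintegral_prod_right'
      _ = ENNReal.ofReal (2 ^ n) * ∫⁻ w, ∫⁻ s, f s w ∂ρ ∂volume := by
          rw [lintegral_lintegral_swap hFm.aemeasurable]
      _ = ENNReal.ofReal (2 ^ n) * ∫⁻ w, g (t - w) * ρ (ball w 1) ∂volume := by
          congr 1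
          apply lintegral_congr
          intro w
          have : ∀ s, f s w = (ball w 1).indicator (fun _ => g (t - w)) s := by
            intro s
            have hiff : w ∈ ball s 1 ↔ s ∈ ball w 1 := by simp [mem_ball, dist_comm]
            by_cases hsw : s ∈ ball w 1
            · show (ball s 1).indicator (fun w => g (t - w)) w = _
              rw [Set.indicator_of_mem (hiff.mpr hsw), Set.indicator_of_mem hsw]
            · show (ball s 1).indicator (fun w => g (t - w)) w = _
              rw [Set.indicator_of_notMem (fun h => hsw (hiff.mp h)),
                Set.indicator_of_notMem hsw]
          simp_rw [this]
          rw [lintegral_indicator measurableSet_ball, setLIntegral_const]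
      _ ≤ ENNReal.ofReal (2 ^ n) * ∫⁻ w, g (t - w) * C ∂volume := by
          gcongr with w
          exact le_trans (measure_mono ball_subset_closedBall) (hball w)
      _ = ENNReal.ofReal (2 ^ n) * (C * ∫⁻ w, g (t - w) ∂volume) := by
          rw [lintegral_mul_const _ hgtm, mul_comm (∫⁻ w, g (t - w) ∂volume) C]
      _ = ENNReal.ofReal (2 ^ n) * (C * ∫⁻ x : Ed d, g x ∂volume) := by
          congr 1
          congr 1
          have hmp : MeasurePreserving (fun w : Ed d => t - w) volume volume :=
            Measure.measurePreserving_sub_left volume t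
          exact hmp.lintegral_comp gE_meas5
  calc ∫⁻ s, g (t - s) ∂ρ = v⁻¹ * (v * ∫⁻ s, g (t - s) ∂ρ) := by
        rw [← mul_assoc, ENNReal.inv_mul_cancel hv0 hvt, one_mul]
    _ ≤ v⁻¹ * (ENNReal.ofReal (2 ^ n) * (C * ∫⁻ x : Ed d, g x ∂volume)) :=
        mul_le_mul_right main _

end Statement5Aux

/-- For a positive regular Borel measure `ρ` on `ℝ^d` (finite on compact sets),
the following are equivalent: (i) `ρ` is translation bounded; (ii) every Schwartz function is
`ρ`-integrable, integration against `ρ` defines a tempered distribution, and this tempered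
distribution is translation bounded on `𝓢`, i.e. `t ↦ ∫ f(t−s) dρ(s)` is bounded for every
Schwartz `f`. -/
theorem statement5 (d : ℕ) (ρ : Measure (Ed d)) [ρ.Regular] :
    IsTranslationBoundedMeasure ρ ↔
      ((∀ f : 𝓢(Ed d, ℂ), Integrable (fun x => f x) ρ) ∧
       (∃ ψ : TD d, ∀ f : 𝓢(Ed d, ℂ), ψ f = ∫ x, f x ∂ρ) ∧
       (∀ f : 𝓢(Ed d, ℂ), ∃ C : ℝ, ∀ t : Ed d, ‖∫ s, f (t - s) ∂ρ‖ ≤ C)) := by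
  constructor
  · -- forward
    intro htb
    obtain ⟨C, hCt, hC⟩ := htb (closedBall (0:Ed d) 1) (isCompact_closedBall 0 1)
    have hball : ∀ w : Ed d, ρ (closedBall w 1) ≤ C := by
      intro w
      have himg : (fun y => w + y) '' closedBall (0:Ed d) 1 = closedBall w 1 := by
        ext z
        constructor
        · rintro ⟨y, hy, rfl⟩
          rw [mem_closedBall, dist_eq_norm]
          simpa using mem_closedBall_zero_iff.mp hy
        · intro hz
          refine ⟨z - w, ?_, by simp only []; rw [add_comm, sub_add_cancel]⟩
          rw [mem_closedBall_zero_iff]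
          rw [mem_closedBall, dist_eq_norm] at hz
          exact hz
      rw [← himg]
      exact hC w
    set I : ℝ≥0∞ := ∫⁻ x : Ed d, ENNReal.ofReal ((1 + ‖x‖) ^ (-(d+1:ℝ))) with hI
    set M : ℝ≥0∞ := (volume (ball (0:Ed d) 1))⁻¹ *
      (ENNReal.ofReal (2 ^ (d+1:ℝ)) * (C * I)) with hM
    have hMt : M ≠ ⊤ := by
      apply ENNReal.mul_ne_top
      · exact ENNReal.inv_ne_top.mpr (measure_ball_pos volume 0 one_pos).ne'
      · exact ENNReal.mul_ne_top ENNReal.ofReal_ne_top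
          (ENNReal.mul_ne_top hCt I_lt_top5.ne)
    have hkey : ∀ t : Ed d,
        ∫⁻ s, ENNReal.ofReal ((1 + ‖t - s‖) ^ (-(d+1:ℝ))) ∂ρ ≤ M :=
      fun t => key_bound5 ρ C hball t
    have hkey0 : ∫⁻ s, ENNReal.ofReal ((1 + ‖s‖) ^ (-(d+1:ℝ))) ∂ρ ≤ M := by
      simpa using hkey 0
    have htg : ρ.HasTemperateGrowth := by
      refine ⟨⟨d+1, ?_⟩⟩
      simp only [Nat.cast_add, Nat.cast_one]
      refine ⟨g_cont5.aestronglyMeasurable, ?_⟩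
      rw [hasFiniteIntegral_iff_ofReal (Eventually.of_forall fun x =>
        Real.rpow_nonneg (by positivity) _)]
      exact lt_of_le_of_lt hkey0 hMt.lt_top
    letI := htg
    refine ⟨fun f => f.integrable, ⟨SchwartzMap.integralCLM ℂ ρ, fun f => rfl⟩, ?_⟩
    intro f
    set Cf : ℝ := 2 ^ (d+1) *
      ((Finset.Iic ((d+1 : ℕ), (0 : ℕ))).sup
        (fun m' => SchwartzMap.seminorm ℝ m'.1 m'.2) f) with hCfdef
    have hCf0 : 0 ≤ Cf := mul_nonneg (by positivity) (apply_nonneg _ f)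
    have hfx : ∀ x : Ed d, ‖f x‖ ≤ Cf * (1 + ‖x‖) ^ (-(d+1:ℝ)) := by
      intro x
      have h1 : (1 + ‖x‖) ^ (d+1) * ‖f x‖ ≤ Cf := by
        have := SchwartzMap.one_add_le_sup_seminorm_apply (𝕜 := ℝ)
          (m := ((d+1 : ℕ), (0 : ℕ))) le_rfl le_rfl f x
        simpa using this
      have hpos : (0:ℝ) < (1 + ‖x‖) ^ (d+1) := by positivity
      have hcast : (-(d+1:ℝ)) = -(((d+1:ℕ)):ℝ) := by push_cast; ring
      rw [hcast, Real.rpow_neg (by positivity), Real.rpow_natCast, ← div_eq_mul_inv,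
        le_div_iff₀ hpos, mul_comm]
      exact h1
    refine ⟨(ENNReal.ofReal Cf * M).toReal, fun t => ?_⟩
    calc ‖∫ s, f (t - s) ∂ρ‖
        ≤ (∫⁻ s, ENNReal.ofReal ‖f (t - s)‖ ∂ρ).toReal :=
          norm_integral_le_lintegral_norm _
      _ ≤ (ENNReal.ofReal Cf * M).toReal := by
          apply ENNReal.toReal_mono (ENNReal.mul_ne_top ENNReal.ofReal_ne_top hMt)
          calc ∫⁻ s, ENNReal.ofReal ‖f (t - s)‖ ∂ρ
              ≤ ∫⁻ s, ENNReal.ofReal Cf *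
                  ENNReal.ofReal ((1 + ‖t - s‖) ^ (-(d+1:ℝ))) ∂ρ := by
                apply lintegral_mono
                intro s
                simp only
                rw [← ENNReal.ofReal_mul hCf0]
                exact ENNReal.ofReal_le_ofReal (hfx (t - s))
            _ = ENNReal.ofReal Cf *
                  ∫⁻ s, ENNReal.ofReal ((1 + ‖t - s‖) ^ (-(d+1:ℝ))) ∂ρ :=
                lintegral_const_mul' _ _ ENNReal.ofReal_ne_top
            _ ≤ ENNReal.ofReal Cf * M := mul_le_mul_right (hkey t) _
  · -- reverse
    rintro ⟨h1, -, h3⟩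
    intro K hK
    obtain ⟨r, hr⟩ := hK.isBounded.subset_closedBall 0
    set R : ℝ := max r 1 with hRdef
    have hR1 : (1:ℝ) ≤ R := le_max_right r 1
    have hR0 : (0:ℝ) < R := lt_of_lt_of_le one_pos hR1
    have hKR : K ⊆ closedBall (0:Ed d) R :=
      hr.trans (closedBall_subset_closedBall (le_max_left r 1))
    set φ : ContDiffBump (0 : Ed d) := ⟨R, R+1, hR0, lt_add_one R⟩ with hφdef
    have hsupp : HasCompactSupport (fun y : Ed d => (φ y : ℂ)) :=
      φ.hasCompactSupport.comp_left (g := fun x : ℝ => (x : ℂ)) (by simp)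
    have hsm : ContDiff ℝ ∞ (fun y : Ed d => (φ y : ℂ)) :=
      Complex.ofRealCLM.contDiff.comp φ.contDiff
    set F : 𝓢(Ed d, ℂ) :=
      { toFun := fun y : Ed d => (φ y : ℂ)
        smooth' := hsm
        decay' := by
          intro k m
          have hcs : HasCompactSupport
              (fun y : Ed d => ‖y‖ ^ k * ‖iteratedFDeriv ℝ m (fun y : Ed d => (φ y : ℂ)) y‖) :=
            ((hsupp.iteratedFDeriv m).norm).mul_left
          have hcont : Continuous
              (fun y : Ed d => ‖y‖ ^ k * ‖iteratedFDeriv ℝ m (fun y : Ed d => (φ y : ℂ)) y‖) :=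
            (continuous_norm.pow k).mul
              ((hsm.continuous_iteratedFDeriv (mod_cast le_top)).norm)
          obtain ⟨C, hC⟩ := hcont.bounded_above_of_compact_support hcs
          exact ⟨C, fun x => le_trans (le_abs_self _)
            (by rw [← Real.norm_eq_abs]; exact hC x)⟩ } with hFdef
    obtain ⟨C, hC⟩ := h3 F
    refine ⟨ENNReal.ofReal C, ENNReal.ofReal_ne_top, fun x => ?_⟩
    have himg : (fun y => x + y) '' K ⊆ closedBall x R := by
      rintro _ ⟨k, hk, rfl⟩
      have hkR := mem_closedBall_zero_iff.mp (hKR hk)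
      rw [mem_closedBall, dist_eq_norm]
      simpa using hkR
    refine le_trans (measure_mono himg) ?_
    have hfin : ρ (closedBall x R) ≠ ⊤ := (isCompact_closedBall x R).measure_lt_top.ne
    rw [← ENNReal.ofReal_toReal hfin]
    apply ENNReal.ofReal_le_ofReal
    have hint : Integrable (fun s : Ed d => F (x - s)) ρ := h1 (reflTranslate x F)
    have hre : Integrable (fun s : Ed d => (F (x - s)).re) ρ := hint.re
    have h01 : ∀ s : Ed d, 0 ≤ (F (x - s)).re := by
      intro s
      show (0:ℝ) ≤ ((φ (x - s) : ℂ)).re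
      rw [Complex.ofReal_re]
      exact φ.nonneg
    calc (ρ (closedBall x R)).toReal
        = ∫ _ in closedBall x R, (1:ℝ) ∂ρ := by
          rw [setIntegral_const, smul_eq_mul, mul_one]; rfl
      _ ≤ ∫ s in closedBall x R, (F (x - s)).re ∂ρ := by
          apply setIntegral_mono_on
            (integrableOn_const hfin)
            hre.integrableOn measurableSet_closedBall
          intro s hs
          have hmem : x - s ∈ closedBall (0 : Ed d) φ.rIn := by
            rw [mem_closedBall_zero_iff]
            show ‖x - s‖ ≤ R
            rw [mem_closedBall, dist_eq_norm, norm_sub_rev] at hs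
            exact hs
          have hone : φ (x - s) = 1 := φ.one_of_mem_closedBall hmem
          show (1:ℝ) ≤ ((φ (x - s) : ℂ)).re
          rw [hone]
          simp
      _ ≤ ∫ s, (F (x - s)).re ∂ρ := setIntegral_le_integral hre (Eventually.of_forall h01)
      _ = (∫ s, F (x - s) ∂ρ).re := by
          simp only [← RCLike.re_to_complex]
          exact integral_re hint
      _ ≤ ‖∫ s, F (x - s) ∂ρ‖ := Complex.re_le_norm _
      _ ≤ C := hC x


end
end

section
/- Let ψ be a tempered distribution on ℝ^d whose Fourier transform is a measure, represented by the pair (ρ, u). Then for every f ∈ 𝓢(ℝ^d), the function ψ∗f is bounded and uniformly continuous, and ‖ψ∗f‖_∞ ≤ ∫ |f̂| dρ. In particular, ψ is translation bounded on 𝓢. -/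
/- Common setting: tempered distributions on ℝ^d, translation boundedness, convolution with
Schwartz functions, smooth approximate van Hove families, autocorrelation, and almost
periodicity, following "Diffraction theory and almost periodic distributions"
(Strungaru–Terauds). -/

open MeasureTheory SchwartzMap Filter Topology Metric Complex
open scoped ComplexConjugate ENNReal Real RealInnerProductSpace ContDiff

noncomputable section

open scoped FourierTransform

lemma aux_fourierInv_reflTranslate {d : ℕ} (f : 𝓢(Ed d, ℂ)) (t x : Ed d) :
    𝓕⁻ (fun s => f (t - s)) x = (Real.fourierChar ⟪t, x⟫ : ℂ) * 𝓕 (⇑f) x := by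
  rw [Real.fourierInv_eq]
  have h1 : ∫ s : Ed d, (Real.fourierChar ⟪s, x⟫ : Circle) • f (t - s)
      = ∫ w : Ed d, (Real.fourierChar ⟪t - w, x⟫ : Circle) • f w := by
    rw [← integral_sub_left_eq_self
      (fun w => (Real.fourierChar ⟪t - w, x⟫ : Circle) • f w) volume t]
    congr 1; funext s; simp [sub_sub_cancel]
  rw [h1]
  have h2 : ∀ w : Ed d, (Real.fourierChar ⟪t - w, x⟫ : Circle) • f w
      = (Real.fourierChar ⟪t, x⟫ : ℂ) •
        ((Real.fourierChar (-⟪w, x⟫) : Circle) • f w) := by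
    intro w
    rw [inner_sub_left, sub_eq_add_neg, AddChar.map_add_eq_mul]
    simp only [Circle.smul_def, Circle.coe_mul, smul_eq_mul, mul_assoc]
  simp_rw [h2]
  rw [integral_smul, Real.fourier_eq]
  simp [smul_eq_mul]

lemma aux_fourierChar_sub_le {a b : ℝ} (h : |2 * π * (a - b)| ≤ 1) :
    ‖(Real.fourierChar a : ℂ) - Real.fourierChar b‖ ≤ 2 * |2 * π * (a - b)| := by
  have hkey : (Real.fourierChar a : ℂ) - Real.fourierChar b
      = (Real.fourierChar b : ℂ) * ((Real.fourierChar (a - b) : ℂ) - 1) := by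
    rw [mul_sub, mul_one, ← Circle.coe_mul, ← AddChar.map_add_eq_mul]
    rw [add_sub_cancel]
  rw [hkey, norm_mul]
  have hb : ‖(Real.fourierChar b : ℂ)‖ = 1 := by
    rw [Circle.norm_coe]
  rw [hb, one_mul]
  have := Complex.norm_exp_sub_one_le (x := (↑(2 * π * (a - b)) : ℂ) * Complex.I)
    (by rwa [norm_mul, Complex.norm_I, mul_one, Complex.norm_real, Real.norm_eq_abs])
  rw [Real.fourierChar_apply]
  calc ‖Complex.exp ((↑(2 * π * (a - b)) : ℂ) * Complex.I) - 1‖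
      ≤ 2 * ‖(↑(2 * π * (a - b)) : ℂ) * Complex.I‖ := this
    _ = 2 * |2 * π * (a - b)| := by
        rw [norm_mul, Complex.norm_I, mul_one, Complex.norm_real, Real.norm_eq_abs]

lemma aux_fourierChar_sub_le_two (a b : ℝ) :
    ‖(Real.fourierChar a : ℂ) - Real.fourierChar b‖ ≤ 2 := by
  refine (norm_sub_le _ _).trans ?_
  rw [Circle.norm_coe, Circle.norm_coe]
  norm_num

/-- If the Fourier transform of `ψ` is a measure, represented by `(ρ, u)`, then
for every Schwartz `f` the function `ψ∗f` is bounded and uniformly continuous with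
`‖ψ∗f‖_∞ ≤ ∫ |f̂| dρ`; in particular `ψ` is translation bounded on `𝓢`. -/
theorem statement10 (d : ℕ) (ψ : TD d) (ρ : Measure (Ed d)) [ρ.Regular]
    (hint : ∀ f : 𝓢(Ed d, ℂ), Integrable (fun x => f x) ρ)
    (u : Ed d → ℂ) (hu : Measurable u) (hu1 : ∀ᵐ x ∂ρ, ‖u x‖ = 1)
    (hFT : ∀ f : 𝓢(Ed d, ℂ),
      ψ (SchwartzMap.fourierTransformCLM ℂ f) = ∫ x, f x * u x ∂ρ) :
    (∀ f : 𝓢(Ed d, ℂ), UniformContinuous (convD ψ f) ∧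
      ∀ t : Ed d, ‖convD ψ f t‖ ≤ ∫ x, ‖SchwartzMap.fourierTransformCLM ℂ f x‖ ∂ρ) ∧
    IsTranslationBoundedTD ψ := by
  have main : ∀ f : 𝓢(Ed d, ℂ), UniformContinuous (convD ψ f) ∧
      ∀ t : Ed d, ‖convD ψ f t‖ ≤ ∫ x, ‖SchwartzMap.fourierTransformCLM ℂ f x‖ ∂ρ := by
    intro f
    set F : Ed d → ℂ := fun x => SchwartzMap.fourierTransformCLM ℂ f x with hFdef
    have hFc : Continuous F := (SchwartzMap.fourierTransformCLM ℂ f).continuous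
    have hIF : Integrable F ρ := hint (SchwartzMap.fourierTransformCLM ℂ f)
    -- the representation formula
    have hrepr : ∀ t : Ed d,
        convD ψ f t = ∫ x, (Real.fourierChar ⟪t, x⟫ : ℂ) * F x * u x ∂ρ := by
      intro t
      set g : 𝓢(Ed d, ℂ) := (SchwartzMap.fourierTransformCLE ℂ 𝓢(Ed d, ℂ)).symm (reflTranslate t f)
        with hgdef
      have hg : SchwartzMap.fourierTransformCLM ℂ g = reflTranslate t f := by
        ext x
        have h1 : (SchwartzMap.fourierTransformCLM ℂ g) x
            = (SchwartzMap.fourierTransformCLE ℂ 𝓢(Ed d, ℂ) g) x := by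
          rfl
        rw [h1, hgdef, (SchwartzMap.fourierTransformCLE ℂ 𝓢(Ed d, ℂ)).apply_symm_apply]
      have hFT' := hFT g
      rw [hg] at hFT'
      have hconv : convD ψ f t = ψ (reflTranslate t f) := rfl
      rw [hconv, hFT']
      refine integral_congr_ae (Filter.Eventually.of_forall fun x => ?_)
      have hgx : g x = 𝓕⁻ (⇑(reflTranslate t f)) x := by
        rw [hgdef, ← SchwartzMap.fourierInv_coe]; rfl
      have hcoe : ⇑(reflTranslate t f) = fun s => f (t - s) := rfl
      show g x * u x = (Real.fourierChar ⟪t, x⟫ : ℂ) * F x * u x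
      rw [hgx, hcoe, aux_fourierInv_reflTranslate]
      rfl
    -- integrability of the integrand
    have hmeasChar : ∀ t : Ed d, Continuous fun x : Ed d => (Real.fourierChar ⟪t, x⟫ : ℂ) := by
      intro t
      exact continuous_induced_dom.comp (Real.continuous_fourierChar.comp
        (Continuous.inner continuous_const continuous_id))
    have hInt : ∀ t : Ed d,
        Integrable (fun x => (Real.fourierChar ⟪t, x⟫ : ℂ) * F x * u x) ρ := by
      intro t
      refine Integrable.mono' hIF.norm
        ((((hmeasChar t).mul hFc).aestronglyMeasurable.mul hu.aestronglyMeasurable)) ?_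
      filter_upwards [hu1] with x hx
      rw [norm_mul, norm_mul, hx, mul_one, Circle.norm_coe,
        one_mul]
    -- the sup bound
    have hbound : ∀ t : Ed d, ‖convD ψ f t‖ ≤ ∫ x, ‖F x‖ ∂ρ := by
      intro t
      rw [hrepr t]
      refine (norm_integral_le_integral_norm _).trans (le_of_eq (integral_congr_ae ?_))
      filter_upwards [hu1] with x hx
      rw [norm_mul, norm_mul, hx, mul_one, Circle.norm_coe,
        one_mul]
    refine ⟨?_, hbound⟩
    -- uniform continuity
    have hdiff : ∀ t t' : Ed d, ‖convD ψ f t - convD ψ f t'‖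
        ≤ ∫ x, ‖(Real.fourierChar ⟪t, x⟫ : ℂ) - Real.fourierChar ⟪t', x⟫‖ * ‖F x‖ ∂ρ := by
      intro t t'
      rw [hrepr t, hrepr t', ← integral_sub (hInt t) (hInt t')]
      refine (norm_integral_le_integral_norm _).trans (le_of_eq (integral_congr_ae ?_))
      filter_upwards [hu1] with x hx
      have heq : (Real.fourierChar ⟪t, x⟫ : ℂ) * F x * u x
          - (Real.fourierChar ⟪t', x⟫ : ℂ) * F x * u x
          = ((Real.fourierChar ⟪t, x⟫ : ℂ) - Real.fourierChar ⟪t', x⟫) * F x * u x := by ring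
      rw [heq, norm_mul, norm_mul, hx, mul_one]
    set I : ℝ := ∫ x, ‖F x‖ ∂ρ with hIdef
    have hInonneg : 0 ≤ I := integral_nonneg fun x => norm_nonneg _
    -- tail control
    have htail : ∀ ε : ℝ, 0 < ε → ∃ n : ℕ, 1 ≤ (n : ℝ) ∧
        ∫ x in (closedBall (0 : Ed d) n)ᶜ, ‖F x‖ ∂ρ < ε := by
      intro ε hε
      have hmono : Monotone fun n : ℕ => closedBall (0 : Ed d) n := fun a b hab =>
        closedBall_subset_closedBall (by exact_mod_cast hab)
      have hunion : (⋃ n : ℕ, closedBall (0 : Ed d) n) = Set.univ :=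
        iUnion_closedBall_nat _
      have htendsto := tendsto_setIntegral_of_monotone
        (fun n : ℕ => measurableSet_closedBall) hmono
        (by rw [hunion]; exact hIF.norm.integrableOn)
      rw [hunion, setIntegral_univ] at htendsto
      have : ∀ᶠ n : ℕ in atTop, I - ε < ∫ x in closedBall (0 : Ed d) n, ‖F x‖ ∂ρ :=
        htendsto.eventually (eventually_gt_nhds (by linarith))
      obtain ⟨n, hn1, hn2⟩ := (this.and (eventually_ge_atTop 1)).exists
      refine ⟨n, by exact_mod_cast hn2, ?_⟩
      have hsplit : (∫ x in closedBall (0 : Ed d) n, ‖F x‖ ∂ρ)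
          + ∫ x in (closedBall (0 : Ed d) n)ᶜ, ‖F x‖ ∂ρ = I :=
        integral_add_compl measurableSet_closedBall hIF.norm
      linarith
    rw [Metric.uniformContinuous_iff]
    intro ε hε
    obtain ⟨n, hn1, hn⟩ := htail (ε / 4) (by linarith)
    have hnpos : (0 : ℝ) < n := by linarith
    set δ : ℝ := min ((2 * π * n)⁻¹) (ε / (8 * π * n * (I + 1))) with hδdef
    have hδpos : 0 < δ := by
      refine lt_min (by positivity) (by positivity)
    refine ⟨δ, hδpos, fun {t t'} hdist => ?_⟩
    rw [dist_eq_norm]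
    have hdist' : ‖t - t'‖ < δ := by rwa [← dist_eq_norm]
    -- the integrand and its integrability
    set D : Ed d → ℝ := fun x =>
      ‖(Real.fourierChar ⟪t, x⟫ : ℂ) - Real.fourierChar ⟪t', x⟫‖ * ‖F x‖ with hDdef
    have hDnonneg : ∀ x, 0 ≤ D x := fun x => mul_nonneg (norm_nonneg _) (norm_nonneg _)
    have hDcont : Continuous D :=
      (((hmeasChar t).sub (hmeasChar t')).norm.mul hFc.norm)
    have hDle : ∀ x, D x ≤ 2 * ‖F x‖ := fun x =>
      mul_le_mul_of_nonneg_right (aux_fourierChar_sub_le_two _ _) (norm_nonneg _)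
    have hDint : Integrable D ρ := by
      refine Integrable.mono' (hIF.norm.const_mul 2) hDcont.aestronglyMeasurable ?_
      refine Filter.Eventually.of_forall fun x => ?_
      rw [Real.norm_eq_abs, _root_.abs_of_nonneg (hDnonneg x)]
      exact hDle x
    have hsplit : ∫ x, D x ∂ρ = (∫ x in closedBall (0 : Ed d) n, D x ∂ρ)
        + ∫ x in (closedBall (0 : Ed d) n)ᶜ, D x ∂ρ :=
      (integral_add_compl measurableSet_closedBall hDint).symm
    -- bound on the ball
    have hball : ∫ x in closedBall (0 : Ed d) n, D x ∂ρ
        ≤ (4 * π * δ * n) * I := by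
      have hstep : ∫ x in closedBall (0 : Ed d) n, D x ∂ρ
          ≤ ∫ x in closedBall (0 : Ed d) n, (4 * π * δ * n) * ‖F x‖ ∂ρ := by
        refine setIntegral_mono_on hDint.integrableOn
          ((hIF.norm.const_mul _).integrableOn) measurableSet_closedBall fun x hx => ?_
        have hxn : ‖x‖ ≤ (n : ℝ) := by
          have := mem_closedBall_iff_norm.mp hx
          simpa using this
        have hinner : |⟪t, x⟫ - ⟪t', x⟫| ≤ δ * n := by
          rw [← inner_sub_left]
          calc |⟪t - t', x⟫| ≤ ‖t - t'‖ * ‖x‖ := abs_real_inner_le_norm _ _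
            _ ≤ δ * n := mul_le_mul hdist'.le hxn (norm_nonneg _) hδpos.le
        have hsmall : |2 * π * (⟪t, x⟫ - ⟪t', x⟫)| ≤ 1 := by
          rw [abs_mul, _root_.abs_of_nonneg (by positivity : (0:ℝ) ≤ 2 * π)]
          have hδ1 : δ ≤ (2 * π * n)⁻¹ := min_le_left _ _
          have h2 : 2 * π * |⟪t, x⟫ - ⟪t', x⟫| ≤ 2 * π * (δ * n) := by
            have := mul_le_mul_of_nonneg_left hinner (by positivity : (0:ℝ) ≤ 2 * π)
            linarith
          have h3 : 2 * π * (δ * n) ≤ 1 := by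
            have := mul_le_mul_of_nonneg_right hδ1 (by positivity : (0:ℝ) ≤ 2 * π * n)
            rw [inv_mul_cancel₀ (by positivity : (2 * π * n : ℝ) ≠ 0)] at this
            nlinarith
          linarith
        have hchar := aux_fourierChar_sub_le hsmall
        refine mul_le_mul_of_nonneg_right (hchar.trans ?_) (norm_nonneg _)
        rw [abs_mul, _root_.abs_of_nonneg (by positivity : (0:ℝ) ≤ 2 * π)]
        nlinarith [abs_nonneg (⟪t, x⟫ - ⟪t', x⟫), hinner, Real.pi_pos, hδpos.le, hnpos.le]
      refine hstep.trans ?_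
      rw [integral_const_mul]
      refine mul_le_mul_of_nonneg_left ?_ (by positivity)
      exact setIntegral_le_integral hIF.norm
        (Filter.Eventually.of_forall fun x => norm_nonneg _)
    -- bound off the ball
    have hcompl : ∫ x in (closedBall (0 : Ed d) n)ᶜ, D x ∂ρ
        ≤ 2 * ∫ x in (closedBall (0 : Ed d) n)ᶜ, ‖F x‖ ∂ρ := by
      rw [← integral_const_mul]
      refine setIntegral_mono_on hDint.integrableOn
        ((hIF.norm.const_mul _).integrableOn) measurableSet_closedBall.compl
        fun x _ => hDle x
    have hδ2 : δ ≤ ε / (8 * π * n * (I + 1)) := min_le_right _ _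
    have hfinal1 : (4 * π * δ * n) * I ≤ ε / 2 := by
      set c : ℝ := ε / (8 * π * n * (I + 1)) with hc
      have hcpos : 0 < c := by positivity
      have h1 : (4 * π * n) * δ ≤ (4 * π * n) * c :=
        mul_le_mul_of_nonneg_left hδ2 (by positivity)
      have h2 := mul_le_mul_of_nonneg_right h1 hInonneg
      have h3 : (0:ℝ) ≤ 4 * π * n * c := by positivity
      have hB : (4 * π * n * c) * (I + 1) = ε / 2 := by
        rw [hc]; field_simp; ring
      nlinarith
    calc ‖convD ψ f t - convD ψ f t'‖ ≤ ∫ x, D x ∂ρ := hdiff t t'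
      _ = (∫ x in closedBall (0 : Ed d) n, D x ∂ρ)
          + ∫ x in (closedBall (0 : Ed d) n)ᶜ, D x ∂ρ := hsplit
      _ < ε := by linarith [hball, hfinal1, hcompl, hn]
  exact ⟨main, fun f => ⟨∫ x, ‖SchwartzMap.fourierTransformCLM ℂ f x‖ ∂ρ, (main f).2⟩⟩

end
end

section
/- Let ψ be a tempered distribution on ℝ^d whose Fourier transform is a measure, represented by the pair (ρ, u). Then ψ is a weakly almost periodic tempered distribution, i.e. ψ∗f is a weakly almost periodic function for every f ∈ 𝓢(ℝ^d). -/
/- Common setting: tempered distributions on ℝ^d, translation boundedness, convolution with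
Schwartz functions, smooth approximate van Hove families, autocorrelation, and almost
periodicity, following "Diffraction theory and almost periodic distributions"
(Strungaru–Terauds). -/

open MeasureTheory SchwartzMap Filter Topology Metric Complex
open scoped ComplexConjugate ENNReal Real RealInnerProductSpace ContDiff

noncomputable section

open scoped FourierTransform

section AuxWAP

/-- The unit character `e^{iθ}` as a function of a real phase. -/
def eC (θ : ℝ) : ℂ := Complex.exp ((θ : ℂ) * Complex.I)

lemma eC_norm (θ : ℝ) : ‖eC θ‖ = 1 := by
  simpa [eC] using Complex.norm_exp_ofReal_mul_I θ

lemma eC_add (a b : ℝ) : eC (a + b) = eC a * eC b := by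
  rw [eC, eC, eC, ← Complex.exp_add]; push_cast; ring_nf

lemma eC_conj (a : ℝ) : (starRingEnd ℂ) (eC a) = eC (-a) := by
  rw [eC, eC, ← Complex.exp_conj]; push_cast
  simp [map_mul, Complex.conj_ofReal, Complex.conj_I]

lemma eC_cont : Continuous eC := by
  unfold eC; fun_prop

lemma norm_eC_sub_one_le (θ : ℝ) : ‖eC θ - 1‖ ≤ 2 * |θ| := by
  rcases le_or_gt (|θ|) 1 with h | h
  · have h2 := Complex.norm_exp_sub_one_le (x := (θ : ℂ) * Complex.I)
      (by simpa [norm_mul, Complex.norm_I, Complex.norm_real] using h)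
    simpa [eC, norm_mul, Complex.norm_I, Complex.norm_real] using h2
  · calc ‖eC θ - 1‖ ≤ ‖eC θ‖ + ‖(1 : ℂ)‖ := norm_sub_le _ _
    _ = 2 := by rw [eC_norm]; norm_num
    _ ≤ 2 * |θ| := by nlinarith

lemma eC_cont_inner {d : ℕ} (t : Ed d) : Continuous fun ξ : Ed d => eC (2 * π * ⟪t, ξ⟫) :=
  eC_cont.comp (continuous_const.mul (Continuous.inner continuous_const continuous_id))

lemma eC_cont_inner' {d : ℕ} (ξ : Ed d) : Continuous fun t : Ed d => eC (2 * π * ⟪t, ξ⟫) :=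
  eC_cont.comp (continuous_const.mul (Continuous.inner continuous_id continuous_const))

lemma integrable_eC_mul {d : ℕ} {ρ : Measure (Ed d)} {w : Ed d → ℂ} (hw : Integrable w ρ)
    (t : Ed d) : Integrable (fun ξ => eC (2 * π * ⟪t, ξ⟫) * w ξ) ρ :=
  hw.bdd_mul (c := 1) (eC_cont_inner t).aestronglyMeasurable (ae_of_all _ fun _ => le_of_eq (eC_norm _))

theorem uc_int {d : ℕ} (ρ : Measure (Ed d)) (w : Ed d → ℂ) (hw : Integrable w ρ) :
    UniformContinuous fun t : Ed d => ∫ ξ, eC (2 * π * ⟪t, ξ⟫) * w ξ ∂ρ := by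
  rw [Metric.uniformContinuous_iff]
  intro ε hε
  set M := (∫ ξ, ‖w ξ‖ ∂ρ) + 1 with hMdef
  have hIw0 : 0 ≤ ∫ ξ, ‖w ξ‖ ∂ρ := integral_nonneg fun _ => norm_nonneg _
  have hM0 : 0 < M := by linarith
  -- tail estimate
  obtain ⟨n, hn⟩ : ∃ n : ℕ, ∫ ξ in (closedBall (0 : Ed d) n)ᶜ, ‖w ξ‖ ∂ρ < ε / 8 := by
    have hmono : Monotone fun n : ℕ => closedBall (0 : Ed d) n := fun a b hab =>
      closedBall_subset_closedBall (by exact_mod_cast hab)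
    have hunion : ⋃ n : ℕ, closedBall (0 : Ed d) n = Set.univ := by
      ext x
      simp only [Set.mem_iUnion, mem_closedBall, dist_zero_right, Set.mem_univ, iff_true]
      obtain ⟨n, hn⟩ := exists_nat_ge ‖x‖
      exact ⟨n, hn⟩
    have h1 : Tendsto (fun n : ℕ => ∫ ξ in closedBall (0 : Ed d) n, ‖w ξ‖ ∂ρ) atTop
        (𝓝 (∫ ξ, ‖w ξ‖ ∂ρ)) := by
      have := MeasureTheory.tendsto_setIntegral_of_monotone
        (fun n : ℕ => measurableSet_closedBall) hmono
        (by rw [hunion]; exact hw.norm.integrableOn)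
      rwa [hunion, setIntegral_univ] at this
    have h2 : ∀ n : ℕ, ∫ ξ in (closedBall (0 : Ed d) n)ᶜ, ‖w ξ‖ ∂ρ
        = (∫ ξ, ‖w ξ‖ ∂ρ) - ∫ ξ in closedBall (0 : Ed d) n, ‖w ξ‖ ∂ρ := fun n => by
      have := integral_add_compl (measurableSet_closedBall (x := (0 : Ed d)) (ε := (n : ℝ)))
        hw.norm
      linarith
    have h3 : Tendsto (fun n : ℕ => ∫ ξ in (closedBall (0 : Ed d) n)ᶜ, ‖w ξ‖ ∂ρ) atTop
        (𝓝 0) := by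
      simp only [h2]
      simpa using (tendsto_const_nhds (x := ∫ ξ, ‖w ξ‖ ∂ρ)).sub h1
    have := (h3.eventually (eventually_lt_nhds (by positivity : (0:ℝ) < ε / 8))).exists
    simpa using this
  set δ := ε / (8 * π * (n + 1) * M) with hδdef
  have hδ0 : 0 < δ := by
    have := Real.pi_pos
    positivity
  refine ⟨δ, hδ0, fun {t t'} hd => ?_⟩
  have hptw : ∀ ξ : Ed d, ‖eC (2 * π * ⟪t, ξ⟫) - eC (2 * π * ⟪t', ξ⟫)‖
      ≤ 4 * π * (‖t - t'‖ * ‖ξ‖) := by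
    intro ξ
    have hfac : eC (2 * π * ⟪t, ξ⟫) - eC (2 * π * ⟪t', ξ⟫)
        = eC (2 * π * ⟪t', ξ⟫) * (eC (2 * π * ⟪t - t', ξ⟫) - 1) := by
      rw [mul_sub, mul_one, ← eC_add]
      rw [inner_sub_left]
      ring_nf
    rw [hfac, norm_mul, eC_norm, one_mul]
    calc ‖eC (2 * π * ⟪t - t', ξ⟫) - 1‖ ≤ 2 * |2 * π * ⟪t - t', ξ⟫| := norm_eC_sub_one_le _
    _ = 4 * π * |⟪t - t', ξ⟫| := by
        rw [abs_mul, abs_mul]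
        rw [_root_.abs_of_nonneg (by norm_num : (0:ℝ) ≤ 2), _root_.abs_of_nonneg Real.pi_pos.le]
        ring
    _ ≤ 4 * π * (‖t - t'‖ * ‖ξ‖) := by
        have := abs_real_inner_le_norm (t - t') ξ
        have hπ : (0:ℝ) ≤ 4 * π := by positivity
        nlinarith
  have hInt := integrable_eC_mul hw
  have hIsub : Integrable (fun ξ => (eC (2 * π * ⟪t, ξ⟫) - eC (2 * π * ⟪t', ξ⟫)) * w ξ) ρ := by
    exact ((hInt t).sub (hInt t')).congr (Eventually.of_forall fun ξ => by simp [sub_mul])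
  rw [dist_eq_norm, ← integral_sub (hInt t) (hInt t')]
  simp only [← sub_mul]
  have hsplit : ∫ ξ, ‖(eC (2 * π * ⟪t, ξ⟫) - eC (2 * π * ⟪t', ξ⟫)) * w ξ‖ ∂ρ
      = (∫ ξ in closedBall (0 : Ed d) n, ‖(eC (2 * π * ⟪t, ξ⟫) - eC (2 * π * ⟪t', ξ⟫)) * w ξ‖ ∂ρ)
      + ∫ ξ in (closedBall (0 : Ed d) n)ᶜ,
          ‖(eC (2 * π * ⟪t, ξ⟫) - eC (2 * π * ⟪t', ξ⟫)) * w ξ‖ ∂ρ :=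
    (integral_add_compl measurableSet_closedBall hIsub.norm).symm
  have hB : (∫ ξ in closedBall (0 : Ed d) n,
      ‖(eC (2 * π * ⟪t, ξ⟫) - eC (2 * π * ⟪t', ξ⟫)) * w ξ‖ ∂ρ) ≤ ε / 2 := by
    have hle : ∀ ξ ∈ closedBall (0 : Ed d) n,
        ‖(eC (2 * π * ⟪t, ξ⟫) - eC (2 * π * ⟪t', ξ⟫)) * w ξ‖
        ≤ (4 * π * (δ * (n + 1))) * ‖w ξ‖ := by
      intro ξ hξ
      rw [norm_mul]
      have h1 := hptw ξ
      have h2 : ‖ξ‖ ≤ (n : ℝ) := by simpa [mem_closedBall, dist_zero_right] using hξ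
      have h3 : ‖t - t'‖ ≤ δ := by rw [← dist_eq_norm]; exact hd.le
      have hπ : (0:ℝ) < π := Real.pi_pos
      have hwn : (0:ℝ) ≤ ‖w ξ‖ := norm_nonneg _
      have : ‖eC (2 * π * ⟪t, ξ⟫) - eC (2 * π * ⟪t', ξ⟫)‖ ≤ 4 * π * (δ * (n + 1)) := by
        calc ‖eC (2 * π * ⟪t, ξ⟫) - eC (2 * π * ⟪t', ξ⟫)‖ ≤ 4 * π * (‖t - t'‖ * ‖ξ‖) := h1
        _ ≤ 4 * π * (δ * (n + 1)) := by
            have h4 : (0:ℝ) ≤ ‖t - t'‖ := norm_nonneg _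
            have h5 : (0:ℝ) ≤ ‖ξ‖ := norm_nonneg _
            have h6 : ‖ξ‖ ≤ (n:ℝ) + 1 := by linarith
            have h7 := mul_le_mul h3 h6 h5 hδ0.le
            nlinarith
      exact mul_le_mul_of_nonneg_right this hwn |>.trans_eq rfl |>.trans (le_refl _)
    calc (∫ ξ in closedBall (0 : Ed d) n,
        ‖(eC (2 * π * ⟪t, ξ⟫) - eC (2 * π * ⟪t', ξ⟫)) * w ξ‖ ∂ρ)
        ≤ ∫ ξ in closedBall (0 : Ed d) n, (4 * π * (δ * (n + 1))) * ‖w ξ‖ ∂ρ := by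
          refine setIntegral_mono_on hIsub.norm.integrableOn
            ((hw.norm.const_mul _).integrableOn) measurableSet_closedBall hle
    _ = (4 * π * (δ * (n + 1))) * ∫ ξ in closedBall (0 : Ed d) n, ‖w ξ‖ ∂ρ :=
          integral_const_mul _ _
    _ ≤ (4 * π * (δ * (n + 1))) * M := by
          have h7 : ∫ ξ in closedBall (0 : Ed d) n, ‖w ξ‖ ∂ρ ≤ ∫ ξ, ‖w ξ‖ ∂ρ :=
            setIntegral_le_integral hw.norm (Eventually.of_forall fun _ => norm_nonneg _)
          have hc : (0:ℝ) ≤ 4 * π * (δ * (n + 1)) := by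
            have := Real.pi_pos; positivity
          nlinarith
    _ = ε / 2 := by
          rw [hδdef]
          have hπ : (π:ℝ) ≠ 0 := Real.pi_ne_zero
          have hM : M ≠ 0 := hM0.ne'
          have hn1 : ((n:ℝ) + 1) ≠ 0 := by positivity
          field_simp
          ring
  have hC : (∫ ξ in (closedBall (0 : Ed d) n)ᶜ,
      ‖(eC (2 * π * ⟪t, ξ⟫) - eC (2 * π * ⟪t', ξ⟫)) * w ξ‖ ∂ρ) ≤ 2 * (ε / 8) := by
    calc (∫ ξ in (closedBall (0 : Ed d) n)ᶜ,
        ‖(eC (2 * π * ⟪t, ξ⟫) - eC (2 * π * ⟪t', ξ⟫)) * w ξ‖ ∂ρ)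
        ≤ ∫ ξ in (closedBall (0 : Ed d) n)ᶜ, 2 * ‖w ξ‖ ∂ρ := by
          refine setIntegral_mono_on hIsub.norm.integrableOn
            ((hw.norm.const_mul _).integrableOn) measurableSet_closedBall.compl ?_
          intro ξ _
          rw [norm_mul]
          have : ‖eC (2 * π * ⟪t, ξ⟫) - eC (2 * π * ⟪t', ξ⟫)‖ ≤ 2 := by
            calc ‖eC (2 * π * ⟪t, ξ⟫) - eC (2 * π * ⟪t', ξ⟫)‖
                ≤ ‖eC (2 * π * ⟪t, ξ⟫)‖ + ‖eC (2 * π * ⟪t', ξ⟫)‖ := norm_sub_le _ _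
            _ = 2 := by rw [eC_norm, eC_norm]; norm_num
          exact mul_le_mul_of_nonneg_right this (norm_nonneg _)
    _ = 2 * ∫ ξ in (closedBall (0 : Ed d) n)ᶜ, ‖w ξ‖ ∂ρ := integral_const_mul _ _
    _ ≤ 2 * (ε / 8) := by linarith
  calc ‖∫ ξ, (eC (2 * π * ⟪t, ξ⟫) - eC (2 * π * ⟪t', ξ⟫)) * w ξ ∂ρ‖
      ≤ ∫ ξ, ‖(eC (2 * π * ⟪t, ξ⟫) - eC (2 * π * ⟪t', ξ⟫)) * w ξ‖ ∂ρ :=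
        norm_integral_le_integral_norm _
  _ ≤ ε / 2 + 2 * (ε / 8) := by rw [hsplit]; exact add_le_add hB hC
  _ < ε := by linarith

theorem isWAPFun_of_rep {d : ℕ} (ρ : Measure (Ed d)) (aF bF : Ed d → ℂ)
    (ha : MemLp aF 2 ρ) (hb : MemLp bF 2 ρ) (g : Ed d → ℂ)
    (hg : ∀ t, g t = ∫ ξ, eC (2 * π * ⟪t, ξ⟫) * (aF ξ * bF ξ) ∂ρ)
    (hgu : UniformContinuous g) : IsWAPFun d g := by
  classical
  set CB := BoundedContinuousFunction (Ed d) ℂ with hCB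
  -- the vectors c_s ∈ L²
  have hcsm : ∀ s : Ed d, MemLp (fun ξ : Ed d => eC (-(2 * π * ⟪s, ξ⟫)) *
      (starRingEnd ℂ) (bF ξ)) 2 ρ := by
    intro s
    refine MemLp.of_le (by exact hb) ?_ ?_
    · exact ((eC_cont.comp ((continuous_const.mul
        (Continuous.inner continuous_const continuous_id)).neg)).aestronglyMeasurable).mul
        (Complex.continuous_conj.comp_aestronglyMeasurable hb.1)
    · filter_upwards with ξ
      rw [norm_mul, eC_norm, one_mul, RCLike.norm_conj]
  let cs : Ed d → Lp ℂ 2 ρ := fun s => (hcsm s).toLp _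
  have h_inner : ∀ (s : Ed d) (x : Lp ℂ 2 ρ),
      (inner ℂ (cs s) x : ℂ) = ∫ ξ, eC (2 * π * ⟪s, ξ⟫) * (bF ξ * x ξ) ∂ρ := by
    intro s x
    rw [MeasureTheory.L2.inner_def]
    refine integral_congr_ae ?_
    filter_upwards [(hcsm s).coeFn_toLp] with ξ hξ
    show (inner ℂ (cs s ξ) (x ξ) : ℂ) = _
    rw [RCLike.inner_apply, hξ]
    rw [map_mul, eC_conj, neg_neg]
    simp only [Complex.conj_conj]
    ring
  have h_norm_cs : ∀ s : Ed d, ‖cs s‖ = (eLpNorm bF 2 ρ).toReal := by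
    intro s
    rw [MeasureTheory.Lp.norm_toLp]
    congr 1
    refine eLpNorm_congr_norm_ae ?_
    filter_upwards with ξ
    rw [norm_mul, eC_norm, one_mul, RCLike.norm_conj]
  have hKint : ∀ x : Lp ℂ 2 ρ, Integrable (fun ξ => bF ξ * x ξ) ρ := by
    intro x
    have h1 : MemLp (bF • (x : Ed d → ℂ)) 1 ρ := by
      exact MemLp.smul (p := 2) (q := 2) (MeasureTheory.Lp.memLp x) hb
    rw [memLp_one_iff_integrable] at h1
    exact h1.congr (Eventually.of_forall fun ξ => rfl)
  have h_cont : ∀ x : Lp ℂ 2 ρ, Continuous fun s => (inner ℂ (cs s) x : ℂ) := by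
    intro x
    have hre : (fun s => (inner ℂ (cs s) x : ℂ))
        = fun s => ∫ ξ, eC (2 * π * ⟪s, ξ⟫) * (bF ξ * x ξ) ∂ρ := funext fun s => h_inner s x
    rw [hre]
    refine continuous_of_dominated (bound := fun ξ => ‖bF ξ * x ξ‖) ?_ ?_ ?_ ?_
    · intro s
      exact ((eC_cont_inner s).aestronglyMeasurable).mul (hKint x).1
    · intro s
      filter_upwards with ξ
      rw [norm_mul, eC_norm, one_mul]
    · exact (hKint x).norm
    · filter_upwards with ξ
      exact (eC_cont_inner' ξ).mul continuous_const
  have h_bd : ∀ (x : Lp ℂ 2 ρ) (s : Ed d),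
      ‖(inner ℂ (cs s) x : ℂ)‖ ≤ (eLpNorm bF 2 ρ).toReal * ‖x‖ := by
    intro x s
    calc ‖(inner ℂ (cs s) x : ℂ)‖ ≤ ‖cs s‖ * ‖x‖ := norm_inner_le_norm _ _
    _ = (eLpNorm bF 2 ρ).toReal * ‖x‖ := by rw [h_norm_cs]
  have hCnn : (0:ℝ) ≤ (eLpNorm bF 2 ρ).toReal := ENNReal.toReal_nonneg
  let Φ : Lp ℂ 2 ρ →L[ℂ] CB := LinearMap.mkContinuous
    { toFun := fun x => BoundedContinuousFunction.ofNormedAddCommGroup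
        (fun s => (inner ℂ (cs s) x : ℂ)) (h_cont x)
        ((eLpNorm bF 2 ρ).toReal * ‖x‖) (h_bd x)
      map_add' := fun x y => by
        ext s
        show (inner ℂ (cs s) (x + y) : ℂ) = (inner ℂ (cs s) x : ℂ) + (inner ℂ (cs s) y : ℂ)
        exact inner_add_right _ _ _
      map_smul' := fun c x => by
        ext s
        show (inner ℂ (cs s) (c • x) : ℂ) = c * (inner ℂ (cs s) x : ℂ)
        exact inner_smul_right _ _ _ }
    ((eLpNorm bF 2 ρ).toReal)
    (fun x => BoundedContinuousFunction.norm_ofNormedAddCommGroup_le (h_cont x)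
      (mul_nonneg hCnn (norm_nonneg _)) (h_bd x))
  have hΦapp : ∀ (x : Lp ℂ 2 ρ) (s : Ed d), Φ x s = (inner ℂ (cs s) x : ℂ) := fun x s => rfl
  let aL : Lp ℂ 2 ρ := ha.toLp aF
  let G : CB := Φ aL
  have hG : ∀ s, G s = g s := by
    intro s
    rw [show G s = (inner ℂ (cs s) aL : ℂ) from rfl, h_inner, hg]
    refine integral_congr_ae ?_
    filter_upwards [ha.coeFn_toLp] with ξ hξ
    rw [show (aL : Ed d → ℂ) ξ = ha.toLp aF ξ from rfl, hξ]
    ring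
  -- translated vectors
  have haTm : ∀ t : Ed d, MemLp (fun ξ : Ed d => eC (-(2 * π * ⟪t, ξ⟫)) * aF ξ) 2 ρ := by
    intro t
    refine MemLp.of_le (by exact ha) ?_ ?_
    · exact ((eC_cont.comp ((continuous_const.mul
        (Continuous.inner continuous_const continuous_id)).neg)).aestronglyMeasurable).mul ha.1
    · filter_upwards with ξ
      rw [norm_mul, eC_norm, one_mul]
  let aT : Ed d → Lp ℂ 2 ρ := fun t => (haTm t).toLp _
  have haTnorm : ∀ t : Ed d, ‖aT t‖ = ‖aL‖ := by
    intro t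
    rw [MeasureTheory.Lp.norm_toLp, MeasureTheory.Lp.norm_toLp]
    congr 1
    refine eLpNorm_congr_norm_ae ?_
    filter_upwards with ξ
    rw [norm_mul, eC_norm, one_mul]
  have hcomp : ∀ (t : Ed d) (pf : Continuous fun s : Ed d => s - t),
      G.compContinuous ⟨fun s => s - t, pf⟩ = Φ (aT t) := by
    intro t pf
    ext s
    rw [BoundedContinuousFunction.compContinuous_apply]
    rw [show (⟨fun s : Ed d => s - t, pf⟩ : C(Ed d, Ed d)) s = s - t from rfl]
    rw [show G (s - t) = (inner ℂ (cs (s - t)) aL : ℂ) from rfl]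
    rw [hΦapp, h_inner, h_inner]
    have e1 : ∫ ξ, eC (2 * π * ⟪s - t, ξ⟫) * (bF ξ * aL ξ) ∂ρ
        = ∫ ξ, eC (2 * π * ⟪s - t, ξ⟫) * (bF ξ * aF ξ) ∂ρ := by
      refine integral_congr_ae ?_
      filter_upwards [ha.coeFn_toLp] with ξ hξ
      rw [show (aL : Ed d → ℂ) ξ = ha.toLp aF ξ from rfl, hξ]
    have e2 : ∫ ξ, eC (2 * π * ⟪s, ξ⟫) * (bF ξ * aT t ξ) ∂ρ
        = ∫ ξ, eC (2 * π * ⟪s, ξ⟫) * (bF ξ * (eC (-(2 * π * ⟪t, ξ⟫)) * aF ξ)) ∂ρ := by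
      refine integral_congr_ae ?_
      filter_upwards [(haTm t).coeFn_toLp] with ξ hξ
      rw [show (aT t : Ed d → ℂ) ξ = (haTm t).toLp _ ξ from rfl, hξ]
    rw [e1, e2]
    have e4 : ∀ ξ : Ed d, eC (2 * π * ⟪s - t, ξ⟫) * (bF ξ * aF ξ)
        = eC (2 * π * ⟪s, ξ⟫) * (bF ξ * (eC (-(2 * π * ⟪t, ξ⟫)) * aF ξ)) := by
      intro ξ
      have e3 : eC (2 * π * ⟪s - t, ξ⟫) = eC (2 * π * ⟪s, ξ⟫) * eC (-(2 * π * ⟪t, ξ⟫)) := by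
        rw [← eC_add]
        congr 1
        rw [inner_sub_left]
        ring
      rw [e3]
      ring
    exact integral_congr_ae (Eventually.of_forall e4)
  -- the weakly compact set
  let TD := InnerProductSpace.toDual ℂ (Lp ℂ 2 ρ)
  let Θ : WeakDual ℂ (Lp ℂ 2 ρ) → WeakSpace ℂ CB := fun x' => toWeakSpace ℂ CB (Φ (TD.symm x'))
  have hΘ : Continuous Θ := by
    refine WeakBilin.continuous_of_continuous_eval _ fun F' => ?_
    have hkey : ∀ x' : WeakDual ℂ (Lp ℂ 2 ρ),
        (topDualPairing ℂ CB).flip (Θ x') F' = (starRingEnd ℂ) (x' (TD.symm (F'.comp Φ))) := by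
      intro x'
      calc (topDualPairing ℂ CB).flip (Θ x') F' = (F'.comp Φ) (TD.symm x') := rfl
      _ = TD (TD.symm (F'.comp Φ)) (TD.symm x') := by rw [TD.apply_symm_apply]
      _ = (inner ℂ (TD.symm (F'.comp Φ)) (TD.symm x') : ℂ) := InnerProductSpace.toDual_apply_apply
      _ = (starRingEnd ℂ) (inner ℂ (TD.symm x') (TD.symm (F'.comp Φ)) : ℂ) :=
        (inner_conj_symm _ _).symm
      _ = (starRingEnd ℂ) (TD (TD.symm x') (TD.symm (F'.comp Φ))) := by
        rw [InnerProductSpace.toDual_apply_apply]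
      _ = (starRingEnd ℂ) (x' (TD.symm (F'.comp Φ))) := by
        congr 1; exact DFunLike.congr_fun (TD.apply_symm_apply (x' : StrongDual ℂ (Lp ℂ 2 ρ))) _
    simp only [hkey]
    exact Complex.continuous_conj.comp (WeakDual.eval_continuous _)
  refine ⟨hgu, G, funext hG, Θ '' (WeakDual.toStrongDual ⁻¹' closedBall 0 ‖aL‖),
    (WeakDual.isCompact_closedBall (𝕜 := ℂ) (E := Lp ℂ 2 ρ) 0 ‖aL‖).image hΘ, fun t => ?_⟩
  refine ⟨StrongDual.toWeakDual (TD (aT t)), ?_, ?_⟩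
  · simp only [Set.mem_preimage, mem_closedBall, dist_zero_right]
    rw [show ‖WeakDual.toStrongDual (StrongDual.toWeakDual (TD (aT t)))‖ = ‖TD (aT t)‖ from rfl]
    rw [TD.norm_map, haTnorm]
  · show toWeakSpace ℂ CB (Φ (TD.symm (TD (aT t)))) = _
    rw [TD.symm_apply_apply, ← hcomp t]

end AuxWAP


/-- If the Fourier transform of `ψ` is a measure, represented by `(ρ, u)`, then
`ψ` is weakly almost periodic: `ψ∗f` is a weakly almost periodic function for every Schwartz
function `f`. -/
theorem statement13 (d : ℕ) (ψ : TD d) (ρ : Measure (Ed d)) [ρ.Regular]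
    (hint : ∀ f : 𝓢(Ed d, ℂ), Integrable (fun x => f x) ρ)
    (u : Ed d → ℂ) (hu : Measurable u) (hu1 : ∀ᵐ x ∂ρ, ‖u x‖ = 1)
    (hFT : ∀ f : 𝓢(Ed d, ℂ),
      ψ (SchwartzMap.fourierTransformCLM ℂ f) = ∫ x, f x * u x ∂ρ) :
    ∀ f : 𝓢(Ed d, ℂ), IsWAPFun d (convD ψ f) := by
  intro f
  set F : 𝓢(Ed d, ℂ) := SchwartzMap.fourierTransformCLM ℂ f with hF
  set w : Ed d → ℂ := fun ξ => F ξ * u ξ with hwdef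
  have hwMeas : Measurable w := (F.continuous.measurable).mul hu
  have hw : Integrable w ρ := by
    refine (hint F).norm.mono' hwMeas.aestronglyMeasurable ?_
    filter_upwards [hu1] with ξ hξ
    rw [hwdef]
    simp only [norm_mul, hξ, mul_one, le_refl]
  -- the key formula : (ψ∗f)(t) is the Fourier-Stieltjes transform of w dρ
  have hconv : ∀ t : Ed d, convD ψ f t = ∫ ξ, eC (2 * π * ⟪t, ξ⟫) * w ξ ∂ρ := by
    intro t
    set gt : 𝓢(Ed d, ℂ) := (FourierTransform.fourierCLE ℂ 𝓢(Ed d, ℂ)).symm (reflTranslate t f) with hgt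
    have h1 : SchwartzMap.fourierTransformCLM ℂ gt = reflTranslate t f := by
      have h0 : SchwartzMap.fourierTransformCLM ℂ gt = FourierTransform.fourierCLE ℂ 𝓢(Ed d, ℂ) gt := rfl
      rw [h0, hgt, (FourierTransform.fourierCLE ℂ 𝓢(Ed d, ℂ)).apply_symm_apply]
    have h2 := hFT gt
    rw [h1] at h2
    have h0 : convD ψ f t = ψ (reflTranslate t f) := rfl
    rw [h0, h2]
    refine integral_congr_ae (Eventually.of_forall fun ξ => ?_)
    beta_reduce
    have h3 : gt ξ = eC (2 * π * ⟪t, ξ⟫) * F ξ := by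
      have h4 : gt ξ = 𝓕⁻ (⇑(reflTranslate t f)) ξ := by
        rw [hgt, FourierTransform.fourierCLE_symm_apply, SchwartzMap.fourierInv_coe]
      have h5 : ⇑(reflTranslate t f) = fun s => f (t - s) := rfl
      rw [h4, Real.fourierInv_eq', h5]
      have h6 := (integral_sub_left_eq_self
        (fun v : Ed d => Complex.exp (((2 * π * ⟪v, ξ⟫ : ℝ) : ℂ) * Complex.I) • f (t - v))
        (volume : Measure (Ed d)) t).symm
      rw [h6]
      have h7 : ∀ x : Ed d,
          Complex.exp (((2 * π * ⟪t - x, ξ⟫ : ℝ) : ℂ) * Complex.I) • f (t - (t - x))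
          = eC (2 * π * ⟪t, ξ⟫) * (Complex.exp (((-2 * π * ⟪x, ξ⟫ : ℝ) : ℂ) * Complex.I) • f x) := by
        intro x
        rw [sub_sub_cancel]
        rw [show (2 * π * ⟪t - x, ξ⟫ : ℝ) = 2 * π * ⟪t, ξ⟫ + (-2) * π * ⟪x, ξ⟫ by
          rw [inner_sub_left]; ring]
        rw [show Complex.exp ((((2 * π * ⟪t, ξ⟫ + (-2) * π * ⟪x, ξ⟫ : ℝ)) : ℂ) * Complex.I)
            = eC (2 * π * ⟪t, ξ⟫) * Complex.exp (((-2 * π * ⟪x, ξ⟫ : ℝ) : ℂ) * Complex.I) from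
          eC_add _ _]
        rw [smul_eq_mul, smul_eq_mul]
        ring
      rw [show (fun x : Ed d =>
            Complex.exp (((2 * π * ⟪t - x, ξ⟫ : ℝ) : ℂ) * Complex.I) • f (t - (t - x)))
          = fun x : Ed d => eC (2 * π * ⟪t, ξ⟫) •
            (Complex.exp (((-2 * π * ⟪x, ξ⟫ : ℝ) : ℂ) * Complex.I) • f x) from
        funext fun x => by rw [h7 x]; rfl]
      rw [integral_smul, smul_eq_mul, hF]
      congr 1
      rw [SchwartzMap.fourierTransformCLM_apply, SchwartzMap.fourier_coe, Real.fourier_eq']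
    rw [h3]
    ring
  -- the square-root factorization of w
  set v : Ed d → ℝ := fun ξ => Real.sqrt ‖w ξ‖ with hvdef
  set bF : Ed d → ℂ := fun ξ => (v ξ : ℂ) with hbFdef
  set aF : Ed d → ℂ := fun ξ => if w ξ = 0 then 0 else w ξ / (v ξ : ℂ) with haFdef
  have hvnn : ∀ ξ, 0 ≤ v ξ := fun ξ => Real.sqrt_nonneg _
  have hvsq : ∀ ξ, v ξ * v ξ = ‖w ξ‖ := fun ξ => Real.mul_self_sqrt (norm_nonneg _)
  have hbnorm : ∀ ξ, ‖bF ξ‖ = v ξ := fun ξ => by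
    rw [hbFdef]
    simp only [Complex.norm_real]
    exact abs_of_nonneg (hvnn ξ)
  have hanorm : ∀ ξ, ‖aF ξ‖ = v ξ := by
    intro ξ
    by_cases h : w ξ = 0
    · simp [haFdef, h, hvdef]
    · have h0 : 0 < ‖w ξ‖ := norm_pos_iff.mpr h
      have hv0 : 0 < v ξ := Real.sqrt_pos.mpr h0
      simp only [haFdef, if_neg h]
      rw [norm_div]
      rw [show ‖((v ξ : ℝ) : ℂ)‖ = v ξ from hbnorm ξ]
      rw [div_eq_iff hv0.ne']
      exact (hvsq ξ).symm
  have hab : ∀ ξ, aF ξ * bF ξ = w ξ := by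
    intro ξ
    by_cases h : w ξ = 0
    · simp [haFdef, hbFdef, h]
    · have hv0 : ((v ξ : ℝ) : ℂ) ≠ 0 := by
        exact_mod_cast (Real.sqrt_pos.mpr (norm_pos_iff.mpr h)).ne'
      simp only [haFdef, hbFdef, if_neg h]
      exact div_mul_cancel₀ _ hv0
  have hvm : Measurable v := Real.continuous_sqrt.measurable.comp hwMeas.norm
  have hbm : Measurable bF := Complex.measurable_ofReal.comp hvm
  have ham : Measurable aF := by
    refine Measurable.ite (hwMeas (measurableSet_singleton 0)) measurable_const ?_
    exact hwMeas.div hbm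
  have hbl : MemLp bF 2 ρ := by
    refine (memLp_two_iff_integrable_sq_norm hbm.aestronglyMeasurable).mpr ?_
    refine hw.norm.congr (Eventually.of_forall fun ξ => ?_)
    beta_reduce
    rw [hbnorm, ← hvsq ξ]
    ring
  have hal : MemLp aF 2 ρ := by
    refine (memLp_two_iff_integrable_sq_norm ham.aestronglyMeasurable).mpr ?_
    refine hw.norm.congr (Eventually.of_forall fun ξ => ?_)
    beta_reduce
    rw [hanorm, ← hvsq ξ]
    ring
  refine isWAPFun_of_rep ρ aF bF hal hbl (convD ψ f) ?_ ?_
  · intro t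
    rw [hconv t]
    exact integral_congr_ae (Eventually.of_forall fun ξ => by beta_reduce; rw [hab ξ])
  · rw [show convD ψ f = fun t => ∫ ξ, eC (2 * π * ⟪t, ξ⟫) * w ξ ∂ρ from funext hconv]
    exact uc_int ρ w hw


end
end
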